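/- Let z_k be the k-th iterate of the randomized Kaczmarz method applied to A^T z = 0 with initial guess z_0, where at each step a column j is chosen independently with probability ||A_{(j)}||^2/||A||_F^2. If A^T A v_ℓ = σ_ℓ^2 v_ℓ and A^T w = 0, then E[⟨z_k - w, A v_ℓ⟩] = (1 - σ_ℓ^2/||A||_F^2)^k ⟨z_0 - w, A v_ℓ⟩. -/

import Mathlib

open Matrix BigOperators Finset

noncomputable def frob2 {m n : ℕ} (A : Matrix (Fin m) (Fin n) ℝ) : ℝ :=
  ∑ i, ∑ j, (A i j) ^ 2

noncomputable def colNorm2 {m n : ℕ} (A : Matrix (Fin m) (Fin n) ℝ) (j : Fin n) : ℝ :=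
  ∑ i, (A i j) ^ 2

noncomputable def colStep {m n : ℕ} (A : Matrix (Fin m) (Fin n) ℝ) (j : Fin n)
    (z : Fin m → ℝ) : Fin m → ℝ :=
  z - ((Aᵀ j ⬝ᵥ z) / colNorm2 A j) • Aᵀ j

noncomputable def zIter {m n : ℕ} (A : Matrix (Fin m) (Fin n) ℝ)
    (z0 : Fin m → ℝ) : List (Fin n) → Fin m → ℝ
  | [] => z0
  | j :: l => colStep A j (zIter A z0 l)

lemma frob2_pos {m n : ℕ} (A : Matrix (Fin m) (Fin n) ℝ) (hA : A ≠ 0) :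
    0 < frob2 A := by
  have h : ∃ i j, A i j ≠ 0 := by
    by_contra h
    push_neg at h
    exact hA (by ext i j; simp [h i j])
  obtain ⟨i, j, hij⟩ := h
  apply Finset.sum_pos' (fun i _ => Finset.sum_nonneg fun j _ => sq_nonneg _)
  exact ⟨i, mem_univ i, Finset.sum_pos' (fun j _ => sq_nonneg _)
    ⟨j, mem_univ j, by positivity⟩⟩

lemma colSum_eq_frob2 {m n : ℕ} (A : Matrix (Fin m) (Fin n) ℝ) :
    ∑ j, colNorm2 A j = frob2 A := by
  simp only [colNorm2, frob2]
  exact (Finset.sum_comm).symm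

lemma step_exp {m n : ℕ} (A : Matrix (Fin m) (Fin n) ℝ) (hA : A ≠ 0)
    (σ : ℝ) (v : Fin n → ℝ) (hv : Aᵀ *ᵥ (A *ᵥ v) = σ ^ 2 • v)
    (w : Fin m → ℝ) (hw : Aᵀ *ᵥ w = 0) (z : Fin m → ℝ) :
    ∑ j, (colNorm2 A j / frob2 A) * ((colStep A j z - w) ⬝ᵥ (A *ᵥ v))
      = (1 - σ ^ 2 / frob2 A) * ((z - w) ⬝ᵥ (A *ᵥ v)) := by
  have hF : 0 < frob2 A := frob2_pos A hA
  have hFne : frob2 A ≠ 0 := ne_of_gt hF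
  have hAv : ∀ j, Aᵀ j ⬝ᵥ (A *ᵥ v) = σ ^ 2 * v j := by
    intro j
    have := congrFun hv j
    simp only [Matrix.mulVec, Pi.smul_apply, smul_eq_mul] at this
    exact this
  have hwAv : w ⬝ᵥ (A *ᵥ v) = 0 := by
    rw [Matrix.dotProduct_mulVec, ← Matrix.mulVec_transpose, hw]
    simp
  set c : ℝ := (z - w) ⬝ᵥ (A *ᵥ v) with hc
  have key : ∀ j, (colNorm2 A j / frob2 A) * ((colStep A j z - w) ⬝ᵥ (A *ᵥ v))
      = (colNorm2 A j / frob2 A) * c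
        - (σ ^ 2 / frob2 A) * ((Aᵀ j ⬝ᵥ z) * v j) := by
    intro j
    have hdot : (colStep A j z - w) ⬝ᵥ (A *ᵥ v)
        = c - ((Aᵀ j ⬝ᵥ z) / colNorm2 A j) * (σ ^ 2 * v j) := by
      have : colStep A j z - w = (z - w) - ((Aᵀ j ⬝ᵥ z) / colNorm2 A j) • Aᵀ j := by
        simp [colStep]; abel
      rw [this, sub_dotProduct, smul_dotProduct, hAv j, smul_eq_mul]
    rw [hdot, mul_sub]
    congr 1
    by_cases hcj : colNorm2 A j = 0
    · have hz : Aᵀ j ⬝ᵥ z = 0 := by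
        have hcol : ∀ i, A i j = 0 := by
          intro i
          have h0 := (Finset.sum_eq_zero_iff_of_nonneg
            (fun i _ => sq_nonneg (A i j))).mp hcj i (mem_univ i)
          exact (pow_eq_zero_iff two_ne_zero).mp h0
        simp [dotProduct, Matrix.transpose_apply, hcol]
      simp [hcj, hz]
    · field_simp
  rw [Finset.sum_congr rfl (fun j _ => key j), Finset.sum_sub_distrib,
    ← Finset.sum_mul, ← Finset.sum_div, colSum_eq_frob2, ← Finset.mul_sum]
  have hsum2 : ∑ j, (Aᵀ j ⬝ᵥ z) * v j = c := by
    have h1 : ∑ j, (Aᵀ j ⬝ᵥ z) * v j = (Aᵀ *ᵥ z) ⬝ᵥ v := by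
      simp [dotProduct, Matrix.mulVec]
    have h2 : (Aᵀ *ᵥ z) ⬝ᵥ v = z ⬝ᵥ (A *ᵥ v) := by
      rw [Matrix.mulVec_transpose, ← Matrix.dotProduct_mulVec]
    have h3 : z ⬝ᵥ (A *ᵥ v) = c + w ⬝ᵥ (A *ᵥ v) := by
      rw [hc, sub_dotProduct]; ring
    rw [h1, h2, h3, hwAv, add_zero]
  rw [hsum2]
  field_simp

theorem rek_z_iter_expectation {m n : ℕ}
    (A : Matrix (Fin m) (Fin n) ℝ) (hA : A ≠ 0)
    (σ : ℝ) (hσ : 0 ≤ σ) (v : Fin n → ℝ)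
    (hv : Aᵀ *ᵥ (A *ᵥ v) = σ ^ 2 • v)
    (w : Fin m → ℝ) (hw : Aᵀ *ᵥ w = 0)
    (z0 : Fin m → ℝ) (k : ℕ) :
    ∑ ω : Fin k → Fin n,
        (∏ t, colNorm2 A (ω t) / frob2 A)
          * ((zIter A z0 (List.ofFn ω) - w) ⬝ᵥ (A *ᵥ v))
      = (1 - σ ^ 2 / frob2 A) ^ k * ((z0 - w) ⬝ᵥ (A *ᵥ v)) := by
  induction k with
  | zero => simp [zIter]
  | succ k ih =>
    rw [← Equiv.sum_comp (Fin.consEquiv fun _ : Fin (k + 1) => Fin n),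
      Fintype.sum_prod_type]
    simp only [Fin.consEquiv_apply]
    have hterm : ∀ (j : Fin n) (ω : Fin k → Fin n),
        (∏ t, colNorm2 A ((Fin.cons j ω : Fin (k + 1) → Fin n) t) / frob2 A)
          * ((zIter A z0 (List.ofFn (Fin.cons j ω : Fin (k + 1) → Fin n)) - w) ⬝ᵥ (A *ᵥ v))
        = (colNorm2 A j / frob2 A) * ((∏ t, colNorm2 A (ω t) / frob2 A)
            * ((colStep A j (zIter A z0 (List.ofFn ω)) - w) ⬝ᵥ (A *ᵥ v))) := by
      intro j ω
      have hl : List.ofFn (Fin.cons j ω : Fin (k + 1) → Fin n) = j :: List.ofFn ω := by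
        rw [List.ofFn_succ]
        simp
      have hp : ∏ t, colNorm2 A ((Fin.cons j ω : Fin (k + 1) → Fin n) t) / frob2 A
          = (colNorm2 A j / frob2 A) * ∏ t, colNorm2 A (ω t) / frob2 A := by
        rw [Fin.prod_univ_succ]
        simp
      rw [hl, hp, zIter]
      ring
    calc ∑ j, ∑ ω : Fin k → Fin n,
          (∏ t, colNorm2 A ((Fin.cons j ω : Fin (k + 1) → Fin n) t) / frob2 A)
            * ((zIter A z0 (List.ofFn (Fin.cons j ω : Fin (k + 1) → Fin n)) - w) ⬝ᵥ (A *ᵥ v))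
        = ∑ ω : Fin k → Fin n, ∑ j, (colNorm2 A j / frob2 A)
            * ((∏ t, colNorm2 A (ω t) / frob2 A)
              * ((colStep A j (zIter A z0 (List.ofFn ω)) - w) ⬝ᵥ (A *ᵥ v))) := by
          rw [Finset.sum_comm]
          exact Finset.sum_congr rfl fun ω _ => Finset.sum_congr rfl fun j _ => hterm j ω
      _ = ∑ ω : Fin k → Fin n, (∏ t, colNorm2 A (ω t) / frob2 A)
            * ∑ j, (colNorm2 A j / frob2 A)
              * ((colStep A j (zIter A z0 (List.ofFn ω)) - w) ⬝ᵥ (A *ᵥ v)) := by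
          refine Finset.sum_congr rfl fun ω _ => ?_
          rw [Finset.mul_sum]
          exact Finset.sum_congr rfl fun j _ => by ring
      _ = ∑ ω : Fin k → Fin n, (∏ t, colNorm2 A (ω t) / frob2 A)
            * ((1 - σ ^ 2 / frob2 A) * ((zIter A z0 (List.ofFn ω) - w) ⬝ᵥ (A *ᵥ v))) := by
          refine Finset.sum_congr rfl fun ω _ => ?_
          rw [step_exp A hA σ v hv w hw]
      _ = (1 - σ ^ 2 / frob2 A) * ∑ ω : Fin k → Fin n,
            (∏ t, colNorm2 A (ω t) / frob2 A)
              * ((zIter A z0 (List.ofFn ω) - w) ⬝ᵥ (A *ᵥ v)) := by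
          rw [Finset.mul_sum]
          exact Finset.sum_congr rfl fun ω _ => by ring
      _ = (1 - σ ^ 2 / frob2 A) ^ (k + 1) * ((z0 - w) ⬝ᵥ (A *ᵥ v)) := by
          rw [ih]; ring
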